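/- (Aggregate form of the violated cut.) Under the closest-pair setup with X ∩ Y_p = ∅ and assuming Σ_t p_t = Σ_n E_n, setting A_{T₀} = Σ_{t∈T₀} Σ_n x^∞_{n,t}, one has A_{T₀} < Σ_{t∈T₀} p_t. -/
import Mathlib


open Finset

/-- Frobenius (Euclidean) norm on `ℝ^{N×T}`. -/
noncomputable def frobNorm {N T : ℕ} (a : Fin N → Fin T → ℝ) : ℝ :=
  Real.sqrt (∑ n, ∑ t, (a n t) ^ 2)

/-- **Aggregate form of the violated cut.**
Under the closest-pair setup with `X ∩ Y_p = ∅` and assuming `Σ_t p_t = Σ_n E_n`,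
setting `A_{T₀} = Σ_{t∈T₀} Σ_n x^∞_{n,t}`, one has `A_{T₀} < Σ_{t∈T₀} p_t`. -/
theorem aggregate_violated_cut
    (N T : ℕ) (hN : 0 < N) (hT : 0 < T)
    (E : Fin N → ℝ) (lb ub : Fin N → Fin T → ℝ)
    (hbounds : ∀ n t, lb n t ≤ ub n t)
    (hXn_nonempty : ∀ n, (∑ t, lb n t) ≤ E n ∧ E n ≤ ∑ t, ub n t)
    (p : Fin T → ℝ) (hpE : (∑ t, p t) = ∑ n, E n)
    (X : Set (Fin N → Fin T → ℝ))
    (hXdef : X = {ℓ | ∀ n, (∑ t, ℓ n t) = E n ∧ ∀ t, lb n t ≤ ℓ n t ∧ ℓ n t ≤ ub n t})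
    (Y : Set (Fin N → Fin T → ℝ))
    (hYdef : Y = {z | ∀ t, (∑ n, z n t) = p t})
    (hdisjoint : X ∩ Y = ∅)
    (xinf yinf : Fin N → Fin T → ℝ)
    (hxinfX : xinf ∈ X) (hyinfY : yinf ∈ Y)
    (hclosest : frobNorm (xinf - yinf)
      = sInf {d : ℝ | ∃ a ∈ X, ∃ b ∈ Y, d = frobNorm (a - b)})
    (T0 : Finset (Fin T))
    (hT0 : T0 = univ.filter fun t => (∑ n, xinf n t) < p t)
    (N0 : Finset (Fin N))
    (hN0 : N0 = univ.filter fun n =>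
      E n < (∑ t ∈ T0ᶜ, lb n t) + ∑ t ∈ T0, ub n t) :
    (∑ t ∈ T0, ∑ n, xinf n t) < ∑ t ∈ T0, p t := by
  subst hXdef hYdef hT0
  -- total sums are equal
  have htot : (∑ t, ∑ n, xinf n t) = ∑ t, p t := by
    rw [Finset.sum_comm, hpE]
    exact Finset.sum_congr rfl fun n _ => (hxinfX n).1
  have hne : (univ.filter fun t => (∑ n, xinf n t) < p t).Nonempty := by
    by_contra h
    rw [Finset.not_nonempty_iff_eq_empty, Finset.filter_eq_empty_iff] at h
    have hle : ∀ t ∈ (univ : Finset (Fin T)), p t ≤ ∑ n, xinf n t :=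
      fun t _ => not_lt.mp (h (mem_univ t))
    have heq := (Finset.sum_eq_sum_iff_of_le hle).mp htot.symm
    have hxY : xinf ∈ {z : Fin N → Fin T → ℝ | ∀ t, (∑ n, z n t) = p t} :=
      fun t => (heq t (mem_univ t)).symm
    have : xinf ∈ (∅ : Set (Fin N → Fin T → ℝ)) := hdisjoint ▸ ⟨hxinfX, hxY⟩
    exact this
  exact Finset.sum_lt_sum_of_nonempty hne fun t ht => (Finset.mem_filter.mp ht).2
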